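/- Let α, β ∈ (0,1], let γ, δ, η, ζ ≥ 0 with d := ηδ + γζ + γη/α > 0, let G be the associated general Green's function, let h : [0,1] → ℝ be continuous, and define x(t) = ∫₀¹ G(t,s) h(s) s^{β−1} ds. Then the limit L₁ := lim_{t→1⁻} t^{1−α} x′(t) exists, equals −(η/d) ∫₀¹ [δ + (γ/α)s^α] h(s) s^{β−1} ds, and the right boundary condition η x(1) + ζ L₁ = 0 holds. -/

import Mathlib

open Set MeasureTheory intervalIntegral Filter Real

/-- With the setup of the general Green's function problem, the limit
`L₁ = lim_{t→1⁻} t^{1−α} x′(t)` exists and equals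
`−(η/d) ∫₀¹ [δ + (γ/α)s^α] h(s) s^{β−1} ds`, and `η x(1) + ζ L₁ = 0`. -/
theorem right_boundary_condition
    (α β : ℝ) (hα : α ∈ Set.Ioc (0:ℝ) 1) (hβ : β ∈ Set.Ioc (0:ℝ) 1)
    (γ δ η ζ : ℝ) (hγ : 0 ≤ γ) (hδ : 0 ≤ δ) (hη : 0 ≤ η) (hζ : 0 ≤ ζ)
    (d : ℝ) (hd : d = η * δ + γ * ζ + γ * η / α) (hdpos : 0 < d)
    (G : ℝ → ℝ → ℝ)
    (hG : ∀ t s : ℝ, G t s = if s ≤ t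
        then (1 / d) * (δ + (γ / α) * s ^ α) * (ζ + (η / α) * (1 - t ^ α))
        else (1 / d) * (δ + (γ / α) * t ^ α) * (ζ + (η / α) * (1 - s ^ α)))
    (h : ℝ → ℝ) (hh : ContinuousOn h (Set.Icc 0 1))
    (x : ℝ → ℝ) (hx : ∀ t : ℝ, x t = ∫ s in (0:ℝ)..1, G t s * h s * s ^ (β - 1))
    (L₁ : ℝ)
    (hL₁ : L₁ = -(η / d) * ∫ s in (0:ℝ)..1, (δ + (γ / α) * s ^ α) * h s * s ^ (β - 1)) :
    Filter.Tendsto (fun t : ℝ => t ^ (1 - α) * deriv x t)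
      (nhdsWithin 1 (Set.Iio (1:ℝ))) (nhds L₁) ∧
    η * x 1 + ζ * L₁ = 0 := by
  obtain ⟨hα0, hα1⟩ := hα
  obtain ⟨hβ0, hβ1⟩ := hβ
  set P : ℝ → ℝ := fun s => δ + γ / α * s ^ α with hPdef
  set Q : ℝ → ℝ := fun s => ζ + η / α * (1 - s ^ α) with hQdef
  set f : ℝ → ℝ := fun s => P s * h s * s ^ (β - 1) with hfdef
  set g : ℝ → ℝ := fun s => Q s * h s * s ^ (β - 1) with hgdef
  set A : ℝ → ℝ := fun u => ∫ s in (0:ℝ)..u, f s with hAdef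
  set B : ℝ → ℝ := fun u => ∫ s in u..(1:ℝ), g s with hBdef
  have hPc : Continuous P := continuous_const.add
    (continuous_const.mul (Real.continuous_rpow_const hα0.le))
  have hQc : Continuous Q := continuous_const.add
    (continuous_const.mul (continuous_const.sub (Real.continuous_rpow_const hα0.le)))
  have hrpow : IntervalIntegrable (fun s : ℝ => s ^ (β - 1)) volume 0 1 :=
    intervalIntegrable_rpow' (by linarith)
  have hh01 : ContinuousOn h (Set.uIcc (0:ℝ) 1) := by
    rwa [Set.uIcc_of_le zero_le_one]
  have hf01 : IntervalIntegrable f volume 0 1 :=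
    hrpow.continuousOn_mul (hPc.continuousOn.mul hh01)
  have hg01 : IntervalIntegrable g volume 0 1 :=
    hrpow.continuousOn_mul (hQc.continuousOn.mul hh01)
  have hfc : ContinuousOn f (Set.Ioo (0:ℝ) 1) :=
    (hPc.continuousOn.mul (hh.mono Set.Ioo_subset_Icc_self)).mul
      (continuousOn_id.rpow_const fun s hs => Or.inl hs.1.ne')
  have hgc : ContinuousOn g (Set.Ioo (0:ℝ) 1) :=
    (hQc.continuousOn.mul (hh.mono Set.Ioo_subset_Icc_self)).mul
      (continuousOn_id.rpow_const fun s hs => Or.inl hs.1.ne')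
  have hsubint : ∀ t ∈ Set.Icc (0:ℝ) 1, Set.uIcc (0:ℝ) t ⊆ Set.uIcc (0:ℝ) 1 ∧
      Set.uIcc t (1:ℝ) ⊆ Set.uIcc (0:ℝ) 1 := by
    intro t ht
    constructor <;> apply Set.uIcc_subset_uIcc <;>
      simp [Set.uIcc_of_le (zero_le_one : (0:ℝ) ≤ 1), ht.1, ht.2]
  -- splitting of x
  have hxsplit : ∀ t ∈ Set.Ioc (0:ℝ) 1, x t = Q t / d * A t + P t / d * B t := by
    intro t ht
    have key1 : ∀ s ∈ Set.Icc (0:ℝ) t, G t s * h s * s ^ (β - 1) = Q t / d * f s := by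
      intro s hs
      rw [hG, if_pos hs.2]
      simp only [hfdef, hPdef, hQdef]
      ring
    have key2 : ∀ s ∈ Set.Icc t (1:ℝ), G t s * h s * s ^ (β - 1) = P t / d * g s := by
      intro s hs
      rw [hG]
      split_ifs with hst
      · have hseq : s = t := le_antisymm hst hs.1
        subst hseq
        simp only [hgdef, hPdef, hQdef]
        ring
      · simp only [hgdef, hPdef, hQdef]
        ring
    have hfint1 : IntervalIntegrable f volume 0 t :=
      hf01.mono_set (hsubint t ⟨ht.1.le, ht.2⟩).1
    have hgint1 : IntervalIntegrable g volume t 1 :=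
      hg01.mono_set (hsubint t ⟨ht.1.le, ht.2⟩).2
    have int1 : IntervalIntegrable (fun s => G t s * h s * s ^ (β - 1)) volume 0 t := by
      rw [intervalIntegrable_iff_integrableOn_Ioc_of_le ht.1.le]
      refine MeasureTheory.IntegrableOn.congr_fun ?_
        (fun s hs => (key1 s ⟨hs.1.le, hs.2⟩).symm) measurableSet_Ioc
      have := hfint1.const_mul (Q t / d)
      rwa [intervalIntegrable_iff_integrableOn_Ioc_of_le ht.1.le] at this
    have int2 : IntervalIntegrable (fun s => G t s * h s * s ^ (β - 1)) volume t 1 := by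
      rw [intervalIntegrable_iff_integrableOn_Ioc_of_le ht.2]
      refine MeasureTheory.IntegrableOn.congr_fun ?_
        (fun s hs => (key2 s ⟨hs.1.le, hs.2⟩).symm) measurableSet_Ioc
      have := hgint1.const_mul (P t / d)
      rwa [intervalIntegrable_iff_integrableOn_Ioc_of_le ht.2] at this
    calc x t = ∫ s in (0:ℝ)..1, G t s * h s * s ^ (β - 1) := hx t
      _ = (∫ s in (0:ℝ)..t, G t s * h s * s ^ (β - 1))
          + ∫ s in t..(1:ℝ), G t s * h s * s ^ (β - 1) :=
        (intervalIntegral.integral_add_adjacent_intervals int1 int2).symm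
      _ = Q t / d * A t + P t / d * B t := by
        rw [intervalIntegral.integral_congr
            (fun s hs => key1 s (by rwa [Set.uIcc_of_le ht.1.le] at hs)),
          intervalIntegral.integral_congr
            (fun s hs => key2 s (by rwa [Set.uIcc_of_le ht.2] at hs)),
          intervalIntegral.integral_const_mul, intervalIntegral.integral_const_mul]
  -- derivative of x on (0,1)
  have hderiv : ∀ t ∈ Set.Ioo (0:ℝ) 1,
      HasDerivAt x (t ^ (α - 1) * ((-η * A t + γ * B t) / d)) t := by
    intro t ht
    have hfint1 : IntervalIntegrable f volume 0 t :=
      hf01.mono_set (hsubint t ⟨ht.1.le, ht.2.le⟩).1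
    have hgint1 : IntervalIntegrable g volume t 1 :=
      hg01.mono_set (hsubint t ⟨ht.1.le, ht.2.le⟩).2
    have hA : HasDerivAt A (f t) t :=
      intervalIntegral.integral_hasDerivAt_right hfint1
        (hfc.stronglyMeasurableAtFilter isOpen_Ioo t ht)
        ((hfc t ht).continuousAt (Ioo_mem_nhds ht.1 ht.2))
    have hB : HasDerivAt B (-(g t)) t :=
      intervalIntegral.integral_hasDerivAt_left hgint1
        (hgc.stronglyMeasurableAtFilter isOpen_Ioo t ht)
        ((hgc t ht).continuousAt (Ioo_mem_nhds ht.1 ht.2))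
    have hrp : HasDerivAt (fun u : ℝ => u ^ α) (α * t ^ (α - 1)) t :=
      Real.hasDerivAt_rpow_const (Or.inl ht.1.ne')
    have hp : HasDerivAt P (γ / α * (α * t ^ (α - 1))) t :=
      (hrp.const_mul (γ / α)).const_add δ
    have hq : HasDerivAt Q (η / α * (0 - α * t ^ (α - 1))) t :=
      (((hasDerivAt_const t (1:ℝ)).sub hrp).const_mul (η / α)).const_add ζ
    have hF : HasDerivAt (fun u => Q u / d * A u + P u / d * B u)
        (η / α * (0 - α * t ^ (α - 1)) / d * A t + Q t / d * f t
          + (γ / α * (α * t ^ (α - 1)) / d * B t + P t / d * -(g t))) t :=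
      ((hq.div_const d).mul hA).add ((hp.div_const d).mul hB)
    have hxeq : x =ᶠ[nhds t] fun u => Q u / d * A u + P u / d * B u :=
      Filter.eventuallyEq_of_mem (Ioo_mem_nhds ht.1 ht.2)
        (fun u hu => hxsplit u ⟨hu.1, hu.2.le⟩)
    have := hF.congr_of_eventuallyEq hxeq
    refine this.congr_deriv ?_
    simp only [hfdef, hgdef, hPdef, hQdef]
    field_simp
    ring
  -- value at 1
  have hB1 : B 1 = 0 := intervalIntegral.integral_same
  have hQ1 : Q 1 = ζ := by simp [hQdef, Real.one_rpow]
  have hA1 : A 1 = ∫ s in (0:ℝ)..1, (δ + γ / α * s ^ α) * h s * s ^ (β - 1) := rfl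
  have hx1 : x 1 = ζ / d * A 1 := by
    rw [hxsplit 1 ⟨zero_lt_one, le_rfl⟩, hB1, hQ1]
    ring
  refine ⟨?_, ?_⟩
  · -- the limit
    have hIoo_mem : Set.Ioo (0:ℝ) 1 ∈ nhdsWithin 1 (Set.Iio (1:ℝ)) :=
      Ioo_mem_nhdsLT_of_mem ⟨zero_lt_one, le_rfl⟩
    have hAcont : ContinuousOn A (Set.uIcc (0:ℝ) 1) :=
      intervalIntegral.continuousOn_primitive_interval' hf01 Set.left_mem_uIcc
    have hgOn : IntegrableOn g (Set.uIcc (0:ℝ) 1) := by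
      rw [Set.uIcc_of_le zero_le_one, integrableOn_Icc_iff_integrableOn_Ioc]
      exact (intervalIntegrable_iff_integrableOn_Ioc_of_le zero_le_one).mp hg01
    have hBcont : ContinuousOn B (Set.uIcc (0:ℝ) 1) :=
      intervalIntegral.continuousOn_primitive_interval_left hgOn
    have hle : nhdsWithin 1 (Set.Iio (1:ℝ)) ≤ nhdsWithin 1 (Set.uIcc (0:ℝ) 1) :=
      nhdsWithin_le_iff.mpr (Filter.mem_of_superset hIoo_mem
        (by rw [Set.uIcc_of_le zero_le_one]; exact Set.Ioo_subset_Icc_self))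
    have hAt : Filter.Tendsto A (nhdsWithin 1 (Set.Iio (1:ℝ))) (nhds (A 1)) :=
      (hAcont 1 Set.right_mem_uIcc).mono_left hle
    have hBt : Filter.Tendsto B (nhdsWithin 1 (Set.Iio (1:ℝ))) (nhds (B 1)) :=
      (hBcont 1 Set.right_mem_uIcc).mono_left hle
    have hmain : Filter.Tendsto (fun t => (-η * A t + γ * B t) / d)
        (nhdsWithin 1 (Set.Iio (1:ℝ))) (nhds ((-η * A 1 + γ * B 1) / d)) :=
      ((hAt.const_mul (-η)).add (hBt.const_mul γ)).div_const d
    have hval : (-η * A 1 + γ * B 1) / d = L₁ := by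
      rw [hB1, hL₁, ← hA1]
      ring
    rw [← hval]
    refine hmain.congr' ?_
    filter_upwards [hIoo_mem] with t ht
    rw [(hderiv t ht).deriv, ← mul_assoc, ← Real.rpow_add ht.1]
    norm_num
  · rw [hx1, hL₁, ← hA1]
    ring
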